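/- Let N = 2^t with t ≥ 1, 0 ≤ θ < 2π, v_k = exp(i(θ + 2πk/N)) for k = 0,…,N−1, and V_N = [v_k^l]_{k,l=0}^{N−1}. Then P_N · V_N equals the 2×2 block matrix [[V_{N/2}, D_{N/2}·V_{N/2}],[V_{N/2}·Ḋ_{N/2}, −D_{N/2}·V_{N/2}·Ḋ_{N/2}]], where V_{N/2} = [v_{2k}^l]_{k,l=0}^{N/2−1}, D_{N/2} = diag(v_{2k}^{N/2})_{k=0}^{N/2−1}, Ḋ_{N/2} = diag(exp(2πil/N))_{l=0}^{N/2−1}, and P_N is the even–odd permutation matrix. -/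

import Mathlib

open Matrix Complex

/-- The even–odd permutation matrix `P_N` of size `N = m + m`:
`(P x)_k = x_{2k}` for `0 ≤ k < m` and `(P x)_{m+k} = x_{2k+1}` for `0 ≤ k < m`. -/
noncomputable def evenOddPerm (m : ℕ) : Matrix (Fin (m + m)) (Fin (m + m)) ℂ :=
  Matrix.of fun i j =>
    if (j : ℕ) = (if (i : ℕ) < m then 2 * (i : ℕ) else 2 * ((i : ℕ) - m) + 1) then 1 else 0

/-- `P_N · V_N = [[V_{N/2}, D·V_{N/2}], [V_{N/2}·Ḋ, −D·V_{N/2}·Ḋ]]` for the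
Vandermonde matrix on equally spaced counterclockwise unit-circle nodes,
with `N = 2 ^ t = m + m`, `D = diag(v_{2k}^{N/2})`, `Ḋ = diag(exp(2πil/N))`. -/
theorem evenOddPerm_mul_vandermonde_eq_blocks
    (t : ℕ) (ht : 1 ≤ t) (m : ℕ) (hm : m = 2 ^ (t - 1))
    (θ : ℝ) (hθ0 : 0 ≤ θ) (hθ1 : θ < 2 * Real.pi)
    (v : ℕ → ℂ)
    (hv : ∀ k : ℕ, v k =
      Complex.exp (Complex.I * ((θ : ℂ) + 2 * (Real.pi : ℂ) * (k : ℂ) / ((m : ℂ) + (m : ℂ))))) :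
    evenOddPerm m * (Matrix.of fun k l : Fin (m + m) => v (k : ℕ) ^ (l : ℕ)) =
      Matrix.reindex finSumFinEquiv finSumFinEquiv
        (Matrix.fromBlocks
          (Matrix.of fun k l : Fin m => v (2 * (k : ℕ)) ^ (l : ℕ))
          (Matrix.diagonal (fun k : Fin m => v (2 * (k : ℕ)) ^ m) *
            (Matrix.of fun k l : Fin m => v (2 * (k : ℕ)) ^ (l : ℕ)))
          ((Matrix.of fun k l : Fin m => v (2 * (k : ℕ)) ^ (l : ℕ)) *
            Matrix.diagonal (fun l : Fin m =>
              Complex.exp (2 * (Real.pi : ℂ) * Complex.I * ((l : ℕ) : ℂ) / ((m : ℂ) + (m : ℂ)))))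
          (-(Matrix.diagonal (fun k : Fin m => v (2 * (k : ℕ)) ^ m) *
            (Matrix.of fun k l : Fin m => v (2 * (k : ℕ)) ^ (l : ℕ)) *
            Matrix.diagonal (fun l : Fin m =>
              Complex.exp (2 * (Real.pi : ℂ) * Complex.I * ((l : ℕ) : ℂ) / ((m : ℂ) + (m : ℂ))))))) := by

  have hm0 : m ≠ 0 := by subst hm; positivity
  have hmC : (m : ℂ) + (m : ℂ) ≠ 0 := by
    have : (m : ℂ) ≠ 0 := Nat.cast_ne_zero.mpr hm0
    intro h; apply this; linear_combination h / 2
  have hexp : ∀ n p : ℕ, v n ^ p =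
      Complex.exp ((p : ℂ) * (Complex.I * ((θ : ℂ) + 2 * (Real.pi : ℂ) * (n : ℂ) / ((m : ℂ) + (m : ℂ))))) := by
    intro n p; rw [hv, ← Complex.exp_nat_mul]
  have case1 : ∀ a b : ℕ, v (2 * a + 1) ^ b =
      v (2 * a) ^ b * Complex.exp (2 * (Real.pi : ℂ) * Complex.I * (b : ℂ) / ((m : ℂ) + (m : ℂ))) := by
    intro a b
    rw [hexp, hexp, ← Complex.exp_add]
    congr 1
    field_simp
    push_cast
    ring
  have case2 : ∀ a b : ℕ, v (2 * a + 1) ^ (m + b) =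
      -(v (2 * a) ^ m * v (2 * a) ^ b *
        Complex.exp (2 * (Real.pi : ℂ) * Complex.I * (b : ℂ) / ((m : ℂ) + (m : ℂ)))) := by
    intro a b
    have h1 : -(v (2 * a) ^ m * v (2 * a) ^ b *
          Complex.exp (2 * (Real.pi : ℂ) * Complex.I * (b : ℂ) / ((m : ℂ) + (m : ℂ))))
        = Complex.exp ((Real.pi : ℂ) * Complex.I) * (v (2 * a) ^ m * v (2 * a) ^ b *
          Complex.exp (2 * (Real.pi : ℂ) * Complex.I * (b : ℂ) / ((m : ℂ) + (m : ℂ)))) := by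
      rw [Complex.exp_pi_mul_I]; ring
    rw [h1, hexp, hexp, hexp, ← Complex.exp_add, ← Complex.exp_add, ← Complex.exp_add]
    congr 1
    field_simp
    push_cast
    ring
  ext i j
  rw [Matrix.mul_apply, Matrix.reindex_apply, Matrix.submatrix_apply]
  have sumkey : ∀ (c p : ℕ) (hc : c < m + m),
      (∑ k : Fin (m + m), (if (k : ℕ) = c then (1 : ℂ) else 0) * v (k : ℕ) ^ p)
        = v c ^ p := by
    intro c p hc
    rw [Finset.sum_eq_single (⟨c, hc⟩ : Fin (m + m))]
    · simp
    · intro k _ hk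
      rw [if_neg (fun h => hk (Fin.ext h)), zero_mul]
    · simp
  rcases hi : finSumFinEquiv.symm i with a | a <;>
    rcases hj : finSumFinEquiv.symm j with b | b
  all_goals
    have hi' := congrArg (finSumFinEquiv ·) hi
    have hj' := congrArg (finSumFinEquiv ·) hj
    simp only [Equiv.apply_symm_apply, finSumFinEquiv_apply_left, finSumFinEquiv_apply_right] at hi' hj'
    subst hi' hj'
  -- case inl inl
  · have ha : (a : ℕ) < m := a.isLt
    simp only [evenOddPerm, Matrix.of_apply, Fin.coe_castAdd, if_pos ha]
    rw [sumkey (2 * (a : ℕ)) _ (by omega)]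
    simp [Matrix.fromBlocks_apply₁₁]
  -- case inl inr
  · have ha : (a : ℕ) < m := a.isLt
    simp only [evenOddPerm, Matrix.of_apply, Fin.coe_castAdd, if_pos ha]
    rw [sumkey (2 * (a : ℕ)) _ (by omega)]
    simp only [Matrix.fromBlocks_apply₁₂, Matrix.diagonal_mul, Matrix.of_apply]
    rw [Fin.coe_natAdd, pow_add]
  -- case inr inl
  · have ha : ¬ ((m + (a : ℕ)) < m) := by omega
    simp only [evenOddPerm, Matrix.of_apply, Fin.coe_natAdd, if_neg ha,
      Nat.add_sub_cancel_left]
    rw [sumkey (2 * (a : ℕ) + 1) _ (by omega)]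
    simp only [Matrix.fromBlocks_apply₂₁, Matrix.mul_diagonal, Matrix.of_apply]
    exact case1 a b
  -- case inr inr
  · have ha : ¬ ((m + (a : ℕ)) < m) := by omega
    simp only [evenOddPerm, Matrix.of_apply, Fin.coe_natAdd, if_neg ha,
      Nat.add_sub_cancel_left]
    rw [sumkey (2 * (a : ℕ) + 1) _ (by omega)]
    simp only [Matrix.fromBlocks_apply₂₂, Matrix.neg_apply, Matrix.mul_diagonal,
      Matrix.diagonal_mul, Matrix.of_apply]
    exact case2 a b
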